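/- Let (β,A) be a numeration system with 0 ∈ A ⊂ ℤ[β] and 1 ∈ A[β]. Then A[β] is an additive abelian group if and only if A[β] = ℤ[β]. -/

import Mathlib

noncomputable section

/-- `ℤ[β]`: the smallest subring of `ℂ` containing `β` (and hence `ℤ`). -/
def Zring (β : ℂ) : Subring ℂ := Subring.closure {β}

/-- `A[β]`: values of finite digit strings over `A` in nonnegative powers of `β`. -/
def Apoly (β : ℂ) (A : Set ℂ) : Set ℂ :=
  {x | ∃ (n : ℕ) (a : ℕ → ℂ), (∀ j, a j ∈ A) ∧
    x = ∑ j ∈ Finset.range (n + 1), a j * β ^ j}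

/-- `ℕ[β]`: finite sums `∑ n_i β^i` with natural number coefficients. -/
def Npoly (β : ℂ) : Set ℂ :=
  {x | ∃ (n : ℕ) (c : ℕ → ℕ), x = ∑ j ∈ Finset.range (n + 1), (c j : ℂ) * β ^ j}

lemma zero_mem_Apoly (β : ℂ) (A : Set ℂ) (h0 : (0 : ℂ) ∈ A) : (0 : ℂ) ∈ Apoly β A := by
  refine ⟨0, fun _ => 0, fun _ => h0, by simp⟩

lemma mul_beta_mem_Apoly (β : ℂ) (A : Set ℂ) (h0 : (0 : ℂ) ∈ A) {x : ℂ}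
    (hx : x ∈ Apoly β A) : β * x ∈ Apoly β A := by
  obtain ⟨n, a, ha, rfl⟩ := hx
  refine ⟨n + 1, fun j => if j = 0 then 0 else a (j - 1), fun j => by dsimp; split <;> simp [h0, ha], ?_⟩
  conv_rhs => rw [Finset.sum_range_succ']
  simp only [reduceIte, zero_mul, add_zero, Nat.succ_ne_zero, if_false, Nat.add_sub_cancel]
  rw [Finset.mul_sum]
  refine Finset.sum_congr rfl fun j _ => ?_
  rw [pow_succ]
  ring

theorem stmt8 (β : ℂ) (hβ : 1 < ‖β‖) (A : Set ℂ) (hAfin : A.Finite)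
    (h0 : (0 : ℂ) ∈ A) (hA : A ⊆ (Zring β : Set ℂ))
    (h1 : (1 : ℂ) ∈ Apoly β A) :
    ((∀ x ∈ Apoly β A, ∀ y ∈ Apoly β A, x + y ∈ Apoly β A) ∧
      (∀ x ∈ Apoly β A, -x ∈ Apoly β A)) ↔
    Apoly β A = (Zring β : Set ℂ) := by
  constructor
  · rintro ⟨Hadd, Hneg⟩
    have hzero := zero_mem_Apoly β A h0
    -- natural multiples
    have hnsmul : ∀ (k : ℕ) {x : ℂ}, x ∈ Apoly β A → (k : ℂ) * x ∈ Apoly β A := by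
      intro k
      induction k with
      | zero => intro x hx; simpa using hzero
      | succ m ih =>
          intro x hx
          have := Hadd _ (ih hx) _ hx
          convert this using 1
          push_cast
          ring
    have hzsmul : ∀ (k : ℤ) {x : ℂ}, x ∈ Apoly β A → (k : ℂ) * x ∈ Apoly β A := by
      intro k x hx
      rcases le_or_gt 0 k with hk | hk
      · lift k to ℕ using hk
        exact_mod_cast hnsmul k hx
      · have : (k : ℂ) * x = -(((-k).toNat : ℂ) * x) := by
          have : ((-k).toNat : ℤ) = -k := Int.toNat_of_nonneg (by omega)
          have h2 : ((-k).toNat : ℂ) = (-k : ℤ) := by exact_mod_cast congrArg (Int.cast : ℤ → ℂ) this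
          rw [h2]; push_cast; ring
        rw [this]
        exact Hneg _ (hnsmul _ hx)
    have hpow : ∀ j : ℕ, β ^ j ∈ Apoly β A := by
      intro j
      induction j with
      | zero => simpa using h1
      | succ m ih => rw [pow_succ, mul_comm]; exact mul_beta_mem_Apoly β A h0 ih
    ext x
    constructor
    · rintro ⟨n, a, ha, rfl⟩
      refine Subring.sum_mem _ fun j _ => Subring.mul_mem _ (hA (ha j)) (Subring.pow_mem _ ?_ j)
      exact Subring.subset_closure rfl
    · intro hx
      have hx' : x ∈ Algebra.adjoin ℤ {β} := by
        rw [Algebra.adjoin_int]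
        exact hx
      rw [Algebra.adjoin_singleton_eq_range_aeval] at hx'
      obtain ⟨p, hp0⟩ := hx'
      have hp : Polynomial.aeval β p = x := hp0
      rw [Polynomial.aeval_eq_sum_range] at hp
      rw [← hp]
      refine Finset.sum_induction _ (· ∈ Apoly β A) (fun a b ha hb => Hadd a ha b hb) hzero ?_
      intro i _
      rw [zsmul_eq_mul]
      exact hzsmul _ (hpow i)
  · intro h
    rw [h]
    exact ⟨fun x hx y hy => Subring.add_mem _ hx hy, fun x hx => Subring.neg_mem _ hx⟩
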